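/- Let L be an even positive definite lattice of rank l, let G be a subgroup of O(L), and let φ_j be a G-invariant weak Jacobi form of weight k_j and index m_j associated to L for 1 ≤ j ≤ l+1. If r ∈ L is a primitive vector whose reflection σ_r belongs to G, then the Jacobian J(φ_1,…,φ_{l+1}) vanishes on the set D_r(τ) = {(τ,z) ∈ ℍ × (L⊗ℂ) : ⟨r^∨, z⟩ ∈ ℤτ ⊕ ℤ}. -/

import Mathlib

open Complex Matrix

noncomputable section

/-- The ℂ-bilinear pairing on `ℂ^l` induced by an integral Gram matrix `M`. -/
def pairC {l : ℕ} (M : Matrix (Fin l) (Fin l) ℤ) (v w : Fin l → ℂ) : ℂ :=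
  ∑ i, ∑ j, v i * (M i j : ℂ) * w j

/-- The ℚ-bilinear pairing on `ℚ^l` induced by an integral Gram matrix `M`. -/
def pairQ {l : ℕ} (M : Matrix (Fin l) (Fin l) ℤ) (v w : Fin l → ℚ) : ℚ :=
  ∑ i, ∑ j, v i * (M i j : ℚ) * w j

def zc {l : ℕ} (x : Fin l → ℤ) : Fin l → ℂ := fun i => (x i : ℂ)
def qc {l : ℕ} (x : Fin l → ℚ) : Fin l → ℂ := fun i => (x i : ℂ)

/-- `M` is the Gram matrix of an even positive definite lattice. -/
structure IsEvenPosDef {l : ℕ} (M : Matrix (Fin l) (Fin l) ℤ) : Prop where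
  symm : M.IsSymm
  even_diag : ∀ i, Even (M i i)
  posDef : (M.map (Int.cast : ℤ → ℝ)).PosDef

/-- `G` is a subgroup of the integral orthogonal group `O(L)` of the lattice with
Gram matrix `M`. -/
structure IsOrthSubgroup {l : ℕ} (M : Matrix (Fin l) (Fin l) ℤ)
    (G : Set (Matrix (Fin l) (Fin l) ℤ)) : Prop where
  one_mem : 1 ∈ G
  mul_mem : ∀ σ₁ ∈ G, ∀ σ₂ ∈ G, σ₁ * σ₂ ∈ G
  inv_mem : ∀ σ ∈ G, ∃ σ' ∈ G, σ * σ' = 1 ∧ σ' * σ = 1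
  isometry : ∀ σ ∈ G, σᵀ * M * σ = M

/-- `ℓ ∈ L^*`, the dual lattice. -/
def InDual {l : ℕ} (M : Matrix (Fin l) (Fin l) ℤ) (ℓ : Fin l → ℚ) : Prop :=
  ∀ x : Fin l → ℤ, ∃ n : ℤ, pairQ M ℓ (fun i => (x i : ℚ)) = n

/-- `c` is a family of Fourier coefficients, supported on `n ≥ 0` and `ℓ ∈ L^*`,
whose associated Fourier series converges to `φ` on `ℍ × (L ⊗ ℂ)`. -/
def FourierRep {l : ℕ} (M : Matrix (Fin l) (Fin l) ℤ) (φ : ℂ → (Fin l → ℂ) → ℂ)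
    (c : ℕ → (Fin l → ℚ) → ℂ) : Prop :=
  (∀ n ℓ, c n ℓ ≠ 0 → InDual M ℓ) ∧
  ∀ τ : ℂ, 0 < τ.im → ∀ z : Fin l → ℂ,
    HasSum (fun p : ℕ × (Fin l → ℚ) =>
      c p.1 p.2 * Complex.exp (2 * (Real.pi : ℂ) * Complex.I *
        ((p.1 : ℂ) * τ + pairC M (qc p.2) z))) (φ τ z)

/-- `φ` is a weak Jacobi form of weight `k` and index `t` associated to the even
positive definite lattice with Gram matrix `M`. -/
def IsWeakJacobiForm {l : ℕ} (M : Matrix (Fin l) (Fin l) ℤ) (k : ℤ) (t : ℕ)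
    (φ : ℂ → (Fin l → ℂ) → ℂ) : Prop :=
  (DifferentiableOn ℂ (fun p : ℂ × (Fin l → ℂ) => φ p.1 p.2)
    ({τ : ℂ | 0 < τ.im} ×ˢ (Set.univ : Set (Fin l → ℂ)))) ∧
  (∀ a b c d : ℤ, a * d - b * c = 1 → ∀ τ : ℂ, 0 < τ.im → ∀ z : Fin l → ℂ,
    φ (((a : ℂ) * τ + (b : ℂ)) / ((c : ℂ) * τ + (d : ℂ)))
        (fun i => z i / ((c : ℂ) * τ + (d : ℂ))) =
      ((c : ℂ) * τ + (d : ℂ)) ^ k *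
        Complex.exp ((t : ℂ) * (Real.pi : ℂ) * Complex.I * (c : ℂ) *
          pairC M z z / ((c : ℂ) * τ + (d : ℂ))) * φ τ z) ∧
  (∀ x y : Fin l → ℤ, ∀ τ : ℂ, 0 < τ.im → ∀ z : Fin l → ℂ,
    φ τ (fun i => z i + (x i : ℂ) * τ + (y i : ℂ)) =
      Complex.exp (-(t : ℂ) * (Real.pi : ℂ) * Complex.I *
        (pairC M (zc x) (zc x) * τ + 2 * pairC M (zc x) z)) * φ τ z) ∧
  (∃ c : ℕ → (Fin l → ℚ) → ℂ, FourierRep M φ c)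

/-- `φ` is invariant under the action of `G` on the lattice variable. -/
def GInvariant {l : ℕ} (G : Set (Matrix (Fin l) (Fin l) ℤ))
    (φ : ℂ → (Fin l → ℂ) → ℂ) : Prop :=
  ∀ σ ∈ G, ∀ τ : ℂ, 0 < τ.im → ∀ z : Fin l → ℂ,
    φ τ ((σ.map (Int.cast : ℤ → ℂ)).mulVec z) = φ τ z

/-- The partial derivative of `φ(τ, 𝔷)` in the `i`-th coordinate of the lattice
variable `𝔷`. -/
def pderiv' {l : ℕ} (i : Fin l) (φ : ℂ → (Fin l → ℂ) → ℂ) (τ : ℂ) (z : Fin l → ℂ) : ℂ :=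
  deriv (fun w : ℂ => φ τ (Function.update z i w)) (z i)

/-- The Jacobian `J(φ_1, ..., φ_{l+1})` of `l+1` Jacobi forms of indices `m j`:
the determinant of the matrix whose first row is `(m_j φ_j)_j` and whose later
rows are the partial derivatives `∂φ_j/∂z_i`. -/
def jacJacobian {l : ℕ} (m : Fin (l + 1) → ℕ) (φ : Fin (l + 1) → ℂ → (Fin l → ℂ) → ℂ)
    (τ : ℂ) (z : Fin l → ℂ) : ℂ :=
  Matrix.det (Matrix.of fun i j : Fin (l + 1) =>
    Fin.cases ((m j : ℂ) * φ j τ z) (fun i' : Fin l => pderiv' i' (φ j) τ z) i)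

/-- `f` is a (holomorphic) modular form of weight `k` on `SL₂(ℤ)`, viewed as a
holomorphic function on the upper half-plane with a Fourier expansion supported
on `n ≥ 0`. -/
def IsModularForm (k : ℤ) (f : ℂ → ℂ) : Prop :=
  DifferentiableOn ℂ f {τ : ℂ | 0 < τ.im} ∧
  (∀ a b c d : ℤ, a * d - b * c = 1 → ∀ τ : ℂ, 0 < τ.im →
    f (((a : ℂ) * τ + (b : ℂ)) / ((c : ℂ) * τ + (d : ℂ))) =
      ((c : ℂ) * τ + (d : ℂ)) ^ k * f τ) ∧
  ∃ cf : ℕ → ℂ, ∀ τ : ℂ, 0 < τ.im →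
    HasSum (fun n : ℕ => cf n * Complex.exp (2 * (Real.pi : ℂ) * Complex.I * (n : ℂ) * τ))
      (f τ)

/-- `φ` is not identically zero on `ℍ × (L ⊗ ℂ)`. -/
def NotIdenticallyZero {l : ℕ} (φ : ℂ → (Fin l → ℂ) → ℂ) : Prop :=
  ∃ τ z, 0 < τ.im ∧ φ τ z ≠ 0

/-- `r` is a primitive lattice vector. -/
def PrimitiveVec {l : ℕ} (r : Fin l → ℤ) : Prop :=
  r ≠ 0 ∧ ∀ (n : ℤ) (s : Fin l → ℤ), r = n • s → IsUnit n

/-- The reflection `σ_r : v ↦ v - ⟨r^∨, v⟩ r` belongs to `G`. -/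
def ReflectionIn {l : ℕ} (M : Matrix (Fin l) (Fin l) ℤ)
    (G : Set (Matrix (Fin l) (Fin l) ℤ)) (r : Fin l → ℤ) : Prop :=
  ∃ S ∈ G, ∀ v : Fin l → ℂ,
    (S.map (Int.cast : ℤ → ℂ)).mulVec v =
      fun i => v i - 2 * pairC M (zc r) v / pairC M (zc r) (zc r) * (r i : ℂ)

/-- `(τ, z)` belongs to `D_r(τ)`, i.e. `⟨r^∨, z⟩ ∈ ℤτ ⊕ ℤ`. -/
def OnMirror {l : ℕ} (M : Matrix (Fin l) (Fin l) ℤ) (r : Fin l → ℤ) (τ : ℂ)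
    (z : Fin l → ℂ) : Prop :=
  ∃ a b : ℤ, 2 * pairC M (zc r) z / pairC M (zc r) (zc r) = (a : ℂ) * τ + (b : ℂ)

/-- `J` vanishes precisely, and with multiplicity one, on the sets `D_r(τ)` for
primitive `r ∈ L` whose reflection lies in `G`. -/
def VanishesOrderOneOnMirrors {l : ℕ} (M : Matrix (Fin l) (Fin l) ℤ)
    (G : Set (Matrix (Fin l) (Fin l) ℤ)) (J : ℂ → (Fin l → ℂ) → ℂ) : Prop :=
  ∀ τ : ℂ, 0 < τ.im → ∀ z : Fin l → ℂ,
    ((J τ z = 0) ↔ ∃ r, PrimitiveVec r ∧ ReflectionIn M G r ∧ OnMirror M r τ z) ∧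
    (∀ r, PrimitiveVec r → ReflectionIn M G r → OnMirror M r τ z →
      (∀ r', PrimitiveVec r' → ReflectionIn M G r' → OnMirror M r' τ z →
        r' = r ∨ r' = -r) →
      deriv (fun w : ℂ => J τ (fun i => z i + w * (r i : ℂ))) 0 ≠ 0)

/-- The Fourier expansion of `φ` has a non-zero coefficient of type `f(0, ℓ)`. -/
def HasNonzeroQZeroTerm {l : ℕ} (M : Matrix (Fin l) (Fin l) ℤ)
    (φ : ℂ → (Fin l → ℂ) → ℂ) : Prop :=
  ∃ c : ℕ → (Fin l → ℚ) → ℂ, FourierRep M φ c ∧ ∃ ℓ, c 0 ℓ ≠ 0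

/-- `ψ = P(φ_1, ..., φ_n)` where `P` is a polynomial with coefficients which are
modular forms on `SL₂(ℤ)`, graded so that each monomial has weight `k` and index `t`. -/
def MPolyRep {l n : ℕ} (kj : Fin n → ℤ) (mj : Fin n → ℕ)
    (φ : Fin n → ℂ → (Fin l → ℂ) → ℂ) (k : ℤ) (t : ℕ)
    (c : (Fin n → ℕ) → ℂ → ℂ) (ψ : ℂ → (Fin l → ℂ) → ℂ) : Prop :=
  {d : Fin n → ℕ | c d ≠ 0}.Finite ∧
  (∀ d : Fin n → ℕ, c d ≠ 0 →
    (∑ j, d j * mj j) = t ∧ IsModularForm (k - ∑ j, (d j : ℤ) * kj j) (c d)) ∧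
  (∀ τ : ℂ, 0 < τ.im → ∀ z : Fin l → ℂ,
    ψ τ z = ∑ᶠ d : Fin n → ℕ, c d τ * ∏ j, (φ j τ z) ^ (d j))

/-- The forms `φ_1, ..., φ_n` are algebraically independent over the graded ring
`M_*(SL₂(ℤ))` of modular forms on `SL₂(ℤ)`. -/
def AlgIndepOverM {l n : ℕ} (φ : Fin n → ℂ → (Fin l → ℂ) → ℂ) : Prop :=
  ∀ c : (Fin n → ℕ) → ℂ → ℂ,
    {d : Fin n → ℕ | c d ≠ 0}.Finite →
    (∀ d, c d ≠ 0 → ∃ w : ℤ, IsModularForm w (c d)) →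
    (∀ τ : ℂ, 0 < τ.im → ∀ z : Fin l → ℂ,
      (∑ᶠ d : Fin n → ℕ, c d τ * ∏ j, (φ j τ z) ^ (d j)) = 0) →
    ∀ d τ, 0 < τ.im → c d τ = 0


section Helpers

open Finset

variable {l : ℕ}

/-- `pairC M u` as a continuous linear map in the second variable. -/
def pairCL (M : Matrix (Fin l) (Fin l) ℤ) (u : Fin l → ℂ) : (Fin l → ℂ) →L[ℂ] ℂ :=
  LinearMap.toContinuousLinearMap
    { toFun := fun z => pairC M u z
      map_add' := by
        intro y z
        simp only [pairC, Pi.add_apply, mul_add, Finset.sum_add_distrib]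
      map_smul' := by
        intro c z
        simp only [pairC, Pi.smul_apply, smul_eq_mul, RingHom.id_apply, Finset.mul_sum]
        exact Finset.sum_congr rfl fun i _ => Finset.sum_congr rfl fun j _ => by ring }

@[simp] lemma pairCL_apply (M : Matrix (Fin l) (Fin l) ℤ) (u z : Fin l → ℂ) :
    pairCL M u z = pairC M u z := rfl

lemma pairC_add_right (M : Matrix (Fin l) (Fin l) ℤ) (u y z : Fin l → ℂ) :
    pairC M u (y + z) = pairC M u y + pairC M u z := (pairCL M u).map_add y z

lemma pairC_sub_right (M : Matrix (Fin l) (Fin l) ℤ) (u y z : Fin l → ℂ) :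
    pairC M u (y - z) = pairC M u y - pairC M u z := (pairCL M u).map_sub y z

lemma pairC_smul_right (M : Matrix (Fin l) (Fin l) ℤ) (u z : Fin l → ℂ) (s : ℂ) :
    pairC M u (s • z) = s * pairC M u z := (pairCL M u).map_smul s z

lemma pairC_smul_left (M : Matrix (Fin l) (Fin l) ℤ) (u z : Fin l → ℂ) (s : ℂ) :
    pairC M (s • u) z = s * pairC M u z := by
  simp only [pairC, Pi.smul_apply, smul_eq_mul, Finset.mul_sum]
  exact Finset.sum_congr rfl fun i _ => Finset.sum_congr rfl fun j _ => by ring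

lemma clm_apply_eq_sum (T : (Fin l → ℂ) →L[ℂ] ℂ) (v : Fin l → ℂ) :
    T v = ∑ k, v k * T (Pi.single k 1) := by
  have hv : v = ∑ k, v k • (Pi.single k (1:ℂ) : Fin l → ℂ) := by
    funext j
    simp [Pi.single_apply, Finset.sum_apply, mul_ite, Finset.sum_ite_eq']
  conv_lhs => rw [hv]
  rw [map_sum]
  exact Finset.sum_congr rfl fun k _ => by rw [_root_.map_smul]; simp [smul_eq_mul]

lemma pderiv'_eq_fderiv {φ : ℂ → (Fin l → ℂ) → ℂ} {τ : ℂ} {z : Fin l → ℂ}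
    (h : DifferentiableAt ℂ (φ τ) z) (i : Fin l) :
    pderiv' i φ τ z = fderiv ℂ (φ τ) z (Pi.single i 1) := by
  have hupd : ∀ w : ℂ, Function.update z i w = z + (w - z i) • (Pi.single i 1 : Fin l → ℂ) := by
    intro w
    funext j
    by_cases hji : j = i
    · subst hji; simp
    · simp [Function.update_of_ne hji, Pi.single_apply, hji]
  have hg : HasDerivAt (fun w : ℂ => Function.update z i w)
      ((Pi.single i 1 : Fin l → ℂ)) (z i) := by
    have h1 : HasDerivAt (fun w : ℂ => z + (w - z i) • (Pi.single i 1 : Fin l → ℂ))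
        ((1:ℂ) • (Pi.single i 1 : Fin l → ℂ)) (z i) :=
      (((hasDerivAt_id (z i)).sub_const (z i)).smul_const _).const_add z
    simpa [hupd] using h1
  have hz : Function.update z i (z i) = z := Function.update_eq_self i z
  have hF : HasFDerivAt (φ τ) (fderiv ℂ (φ τ) z) (Function.update z i (z i)) := by
    rw [hz]; exact h.hasFDerivAt
  have hcomp := hF.comp_hasDerivAt (z i) hg
  have : HasDerivAt (fun w : ℂ => φ τ (Function.update z i w))
      (fderiv ℂ (φ τ) z (Pi.single i 1)) (z i) := by
    exact hcomp
  exact this.deriv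

/-- Differentiating a reflection-invariance identity. -/
lemma pderiv_reflect {φ : ℂ → (Fin l → ℂ) → ℂ} {τ : ℂ}
    (hd : ∀ y : Fin l → ℂ, DifferentiableAt ℂ (φ τ) y)
    (S : Matrix (Fin l) (Fin l) ℂ)
    (hinv : ∀ v : Fin l → ℂ, φ τ (S *ᵥ v) = φ τ v) (u : Fin l → ℂ) (i : Fin l) :
    pderiv' i φ τ u = ∑ k, S k i * pderiv' k φ τ (S *ᵥ u) := by
  classical
  set L : (Fin l → ℂ) →L[ℂ] (Fin l → ℂ) :=
    LinearMap.toContinuousLinearMap (Matrix.mulVecLin S) with hL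
  have hLa : ∀ v, L v = S *ᵥ v := fun v => rfl
  have h1 : HasFDerivAt (φ τ) (fderiv ℂ (φ τ) (S *ᵥ u)) (S *ᵥ u) := (hd _).hasFDerivAt
  have h2 : HasFDerivAt (fun v : Fin l → ℂ => S *ᵥ v) L u := by
    simpa [funext hLa] using L.hasFDerivAt (x := u)
  have h3 : HasFDerivAt (fun v : Fin l → ℂ => φ τ (S *ᵥ v))
      ((fderiv ℂ (φ τ) (S *ᵥ u)).comp L) u := h1.comp u h2
  have h4 : HasFDerivAt (φ τ) ((fderiv ℂ (φ τ) (S *ᵥ u)).comp L) u := by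
    have : (fun v : Fin l → ℂ => φ τ (S *ᵥ v)) = φ τ := funext hinv
    rwa [this] at h3
  have h5 : fderiv ℂ (φ τ) u = (fderiv ℂ (φ τ) (S *ᵥ u)).comp L :=
    (hd u).hasFDerivAt.unique h4
  rw [pderiv'_eq_fderiv (hd u), h5]
  have h6 : ((fderiv ℂ (φ τ) (S *ᵥ u)).comp L) (Pi.single i 1)
      = fderiv ℂ (φ τ) (S *ᵥ u) (S *ᵥ Pi.single i 1) := rfl
  rw [h6]
  have h7 : (S *ᵥ Pi.single i (1:ℂ)) = fun k => S k i := by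
    simp [Matrix.mulVec_single]
    rfl
  rw [h7, clm_apply_eq_sum]
  exact Finset.sum_congr rfl fun k _ => by
    rw [pderiv'_eq_fderiv (hd _)]

/-- Differentiating an elliptic-transformation identity. -/
lemma pderiv_translate {φ : ℂ → (Fin l → ℂ) → ℂ} {τ : ℂ}
    (hd : ∀ y : Fin l → ℂ, DifferentiableAt ℂ (φ τ) y)
    (M : Matrix (Fin l) (Fin l) ℤ) (x c : Fin l → ℂ) (κ β : ℂ)
    (hell : ∀ v : Fin l → ℂ, φ τ (v + c) = Complex.exp (κ + β * pairC M x v) * φ τ v)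
    (u : Fin l → ℂ) (i : Fin l) :
    pderiv' i φ τ (u + c) = Complex.exp (κ + β * pairC M x u) *
      (pderiv' i φ τ u + β * pairC M x (Pi.single i 1) * φ τ u) := by
  classical
  have hFu : HasFDerivAt (φ τ) (fderiv ℂ (φ τ) u) u := (hd u).hasFDerivAt
  have hFuc : HasFDerivAt (φ τ) (fderiv ℂ (φ τ) (u + c)) (u + c) := (hd (u + c)).hasFDerivAt
  have htr : HasFDerivAt (fun v : Fin l → ℂ => v + c)
      (ContinuousLinearMap.id ℂ (Fin l → ℂ)) u := (hasFDerivAt_id u).add_const c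
  have hLHS : HasFDerivAt (fun v : Fin l → ℂ => φ τ (v + c))
      ((fderiv ℂ (φ τ) (u + c)).comp (ContinuousLinearMap.id ℂ (Fin l → ℂ))) u :=
    hFuc.comp u htr
  have hEin : HasFDerivAt (fun v : Fin l → ℂ => κ + β * pairC M x v)
      (β • (pairCL M x)) u := by
    have h0 : HasFDerivAt (fun v : Fin l → ℂ => pairCL M x v) (pairCL M x) u :=
      (pairCL M x).hasFDerivAt
    have h1 : HasFDerivAt (fun v : Fin l → ℂ => β * pairCL M x v) (β • pairCL M x) u :=
      h0.const_mul β
    simpa using h1.const_add κ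
  have hE : HasFDerivAt (fun v : Fin l → ℂ => Complex.exp (κ + β * pairC M x v))
      (Complex.exp (κ + β * pairC M x u) • (β • (pairCL M x))) u := hEin.cexp
  have hRHS := hE.mul hFu
  have hfun : (fun v : Fin l → ℂ => φ τ (v + c)) =
      fun v => Complex.exp (κ + β * pairC M x v) * φ τ v := funext hell
  rw [hfun] at hLHS
  have huniq := hLHS.unique hRHS
  have h1 := congrArg (fun (T : (Fin l → ℂ) →L[ℂ] ℂ) => T (Pi.single i 1)) huniq
  simp only [ContinuousLinearMap.comp_apply, ContinuousLinearMap.id_apply,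
    ContinuousLinearMap.add_apply, ContinuousLinearMap.smul_apply, pairCL_apply,
    smul_eq_mul] at h1
  rw [pderiv'_eq_fderiv (hd (u + c)), h1, pderiv'_eq_fderiv (hd u)]
  ring

/-- Determinant of a `(1 + l) × (1 + l)` matrix with first row `(1, 0, …, 0)`. -/
lemma det_blockish (b : Fin l → ℂ) (N : Matrix (Fin l) (Fin l) ℂ) :
    (Matrix.of fun p q : Fin (l + 1) =>
      Fin.cases (Fin.cases (1:ℂ) (fun _ => 0) q)
        (fun i => Fin.cases (b i) (fun k => N i k) q) p).det = N.det := by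
  classical
  rw [Matrix.det_succ_row_zero]
  rw [Finset.sum_eq_single (0 : Fin (l + 1))]
  · have hsub : ((Matrix.of fun p q : Fin (l + 1) =>
        Fin.cases (Fin.cases (1:ℂ) (fun _ => 0) q)
          (fun i => Fin.cases (b i) (fun k => N i k) q) p).submatrix
          Fin.succ (Fin.succAbove 0)) = N := by
      ext i k
      simp [Fin.zero_succAbove]
    rw [hsub]
    simp
  · intro j _ hj
    obtain ⟨j', rfl⟩ := Fin.exists_succ_eq.2 hj
    simp
  · intro h; exact absurd (Finset.mem_univ _) h

/-- The quadratic form of an even symmetric matrix takes even values. -/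
lemma even_quad {M : Matrix (Fin l) (Fin l) ℤ} (hsym : M.IsSymm)
    (hdiag : ∀ i, Even (M i i)) (r : Fin l → ℤ) :
    Even (∑ i, ∑ j, r i * M i j * r j) := by
  classical
  rw [even_iff_two_dvd, show (2:ℤ) = ((2:ℕ):ℤ) from rfl, ← ZMod.intCast_zmod_eq_zero_iff_dvd]
  push_cast
  rw [← Finset.sum_product']
  rw [← Finset.sum_filter_add_sum_filter_not (Finset.univ ×ˢ Finset.univ)
    (fun p : Fin l × Fin l => p.1 = p.2)]
  have hdiag0 : (∑ p ∈ (Finset.univ ×ˢ Finset.univ).filter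
      (fun p : Fin l × Fin l => p.1 = p.2),
      ((r p.1 : ZMod 2) * (M p.1 p.2 : ZMod 2) * (r p.2 : ZMod 2))) = 0 := by
    apply Finset.sum_eq_zero
    intro p hp
    have hp12 : p.1 = p.2 := (Finset.mem_filter.1 hp).2
    obtain ⟨s, hs⟩ := hdiag p.1
    rw [← hp12, hs]
    push_cast
    ring_nf
    rw [show ((2:ZMod 2) = 0) from rfl]
    ring
  have hoff0 : (∑ p ∈ (Finset.univ ×ˢ Finset.univ).filter
      (fun p : Fin l × Fin l => ¬ p.1 = p.2),
      ((r p.1 : ZMod 2) * (M p.1 p.2 : ZMod 2) * (r p.2 : ZMod 2))) = 0 := by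
    apply Finset.sum_involution (fun p _ => (p.2, p.1))
    · intro p hp
      have hM : M p.2 p.1 = M p.1 p.2 := hsym.apply p.1 p.2
      have h2 : ((2:ZMod 2) = 0) := rfl
      calc ((r p.1 : ZMod 2) * (M p.1 p.2 : ZMod 2) * (r p.2 : ZMod 2)) +
          ((r p.2 : ZMod 2) * (M p.2 p.1 : ZMod 2) * (r p.1 : ZMod 2))
          = 2 * ((r p.1 : ZMod 2) * (M p.1 p.2 : ZMod 2) * (r p.2 : ZMod 2)) := by
            rw [hM]; ring
        _ = 0 := by rw [h2]; ring
    · intro p hp _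
      have hne : ¬ p.1 = p.2 := (Finset.mem_filter.1 hp).2
      intro hcontra
      exact hne ((congrArg Prod.fst hcontra).symm)
    · intro p hp
      have hne : ¬ p.1 = p.2 := (Finset.mem_filter.1 hp).2
      simp only [Finset.mem_filter, Finset.mem_product, Finset.mem_univ, true_and, and_true]
      exact fun h => hne h.symm
    · intro p hp
      rfl
  rw [hdiag0, hoff0, add_zero]

end Helpers


/-- If `r ∈ L` is a primitive vector whose reflection `σ_r` belongs to
`G`, then the Jacobian `J(φ_1,…,φ_{l+1})` vanishes on the set
`D_r(τ) = {(τ,𝔷) : ⟨r^∨, 𝔷⟩ ∈ ℤτ ⊕ ℤ}`. -/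
theorem jacobian_vanishes_on_mirrors {l : ℕ}
    (M : Matrix (Fin l) (Fin l) ℤ) (hM : IsEvenPosDef M)
    (G : Set (Matrix (Fin l) (Fin l) ℤ)) (hG : IsOrthSubgroup M G)
    (kj : Fin (l + 1) → ℤ) (mj : Fin (l + 1) → ℕ)
    (φ : Fin (l + 1) → ℂ → (Fin l → ℂ) → ℂ)
    (hφ : ∀ j, IsWeakJacobiForm M (kj j) (mj j) (φ j))
    (hφG : ∀ j, GInvariant G (φ j))
    (r : Fin l → ℤ) (hr : PrimitiveVec r) (hσr : ReflectionIn M G r) :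
    ∀ τ : ℂ, 0 < τ.im → ∀ z : Fin l → ℂ,
      OnMirror M r τ z → jacJacobian mj φ τ z = 0 := by
  classical
  intro τ hτ z hOn
  obtain ⟨a, b, hab⟩ := hOn
  obtain ⟨S, hSG, hSv⟩ := hσr
  set Sc : Matrix (Fin l) (Fin l) ℂ := S.map (Int.cast : ℤ → ℂ) with hScdef
  set rC : Fin l → ℂ := zc r with hrCdef
  set Q : ℂ := pairC M rC rC with hQdef
  set Qz : ℤ := ∑ i, ∑ j, r i * M i j * r j with hQzdef
  have hQcast : Q = (Qz : ℂ) := by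
    rw [hQdef, hQzdef]
    push_cast
    rfl
  -- positivity of Q
  have hQzpos : 0 < Qz := by
    have hx : (fun i => (r i : ℝ)) ≠ 0 := by
      intro h0
      apply hr.1
      funext i
      have h1 := congrFun h0 i
      simp only [Pi.zero_apply] at h1
      exact_mod_cast h1
    have hpos := (Matrix.posDef_iff_dotProduct_mulVec.1 hM.posDef).2 hx
    have hdot : star (fun i => (r i : ℝ)) ⬝ᵥ
        ((M.map (Int.cast : ℤ → ℝ)) *ᵥ fun i => (r i : ℝ)) = (Qz : ℝ) := by
      simp only [star_trivial, dotProduct, Matrix.mulVec, Matrix.map_apply,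
        hQzdef, Finset.mul_sum]
      push_cast
      exact Finset.sum_congr rfl fun i _ => Finset.sum_congr rfl fun j _ => by ring
    rw [hdot] at hpos
    exact_mod_cast hpos
  have hQ0 : Q ≠ 0 := by
    rw [hQcast]
    exact_mod_cast hQzpos.ne'
  have h2pair : 2 * pairC M rC z = ((a:ℂ) * τ + (b:ℂ)) * Q := by
    rw [div_eq_iff hQ0] at hab
    exact hab
  have hrC : ∀ i, ((r i : ℤ) : ℂ) = rC i := fun i => rfl
  -- differentiability
  have hopen : IsOpen (({τ : ℂ | 0 < τ.im} : Set ℂ) ×ˢ (Set.univ : Set (Fin l → ℂ))) :=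
    (isOpen_lt continuous_const Complex.continuous_im).prod isOpen_univ
  have hdiff : ∀ j (y : Fin l → ℂ), DifferentiableAt ℂ (φ j τ) y := by
    intro j y
    have hmem : (τ, y) ∈ (({τ : ℂ | 0 < τ.im} : Set ℂ) ×ˢ (Set.univ : Set (Fin l → ℂ))) :=
      ⟨hτ, Set.mem_univ _⟩
    have h1 : DifferentiableAt ℂ (fun p : ℂ × (Fin l → ℂ) => φ j p.1 p.2) (τ, y) :=
      (hφ j).1.differentiableAt (hopen.mem_nhds hmem)
    have h2 : DifferentiableAt ℂ (fun y' : Fin l → ℂ => ((τ, y') : ℂ × (Fin l → ℂ))) y :=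
      DifferentiableAt.prodMk (differentiableAt_const τ) differentiableAt_id
    exact h1.comp y h2
  have hinv : ∀ j (v : Fin l → ℂ), φ j τ (Sc *ᵥ v) = φ j τ v := by
    intro j v
    exact hφG j S hSG τ hτ v
  -- the reflected point
  set u : Fin l → ℂ := Sc *ᵥ z with hudef
  have hu : u = fun i => z i - ((a:ℂ) * τ + (b:ℂ)) * rC i := by
    rw [hudef, hSv z, hab]
    simp only [hrC]
  -- the translation data
  set xC : Fin l → ℂ := zc (a • r) with hxCdef
  have hxC : xC = (a:ℂ) • rC := by
    funext i
    simp only [hxCdef, hrCdef, zc, Pi.smul_apply, smul_eq_mul]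
    push_cast
    ring
  set cvec : Fin l → ℂ := fun k => xC k * τ + zc (b • r) k with hcvecdef
  have hz : z = u + cvec := by
    funext i
    simp only [Pi.add_apply, hcvecdef, hxCdef, hrCdef, zc, Pi.smul_apply, smul_eq_mul]
    rw [hu]
    simp only [hrCdef, zc]
    push_cast
    ring
  set P : ℂ := pairC M xC xC with hPdef
  -- elliptic transformation in the convenient form
  have hell : ∀ j (v : Fin l → ℂ), φ j τ (v + cvec) =
      Complex.exp ((-(mj j : ℂ) * (Real.pi : ℂ) * Complex.I * (P * τ)) +
        (-(mj j : ℂ) * (Real.pi : ℂ) * Complex.I * 2) * pairC M xC v) * φ j τ v := by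
    intro j v
    have h0 := (hφ j).2.2.1 (a • r) (b • r) τ hτ v
    have harg : (fun i => v i + (((a • r) i : ℤ) : ℂ) * τ + (((b • r) i : ℤ) : ℂ)) =
        v + cvec := by
      funext i
      simp only [Pi.add_apply, hcvecdef, hxCdef, zc]
      ring
    rw [harg] at h0
    rw [h0]
    have hexp : -(mj j : ℂ) * (Real.pi : ℂ) * Complex.I *
        (pairC M (zc (a • r)) (zc (a • r)) * τ + 2 * pairC M (zc (a • r)) v) =
        (-(mj j : ℂ) * (Real.pi : ℂ) * Complex.I * (P * τ)) +
        (-(mj j : ℂ) * (Real.pi : ℂ) * Complex.I * 2) * pairC M xC v := by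
      rw [hPdef, ← hxCdef]
      ring
    rw [hexp]
  -- the matrix of the Jacobian
  set A : (Fin l → ℂ) → Matrix (Fin (l + 1)) (Fin (l + 1)) ℂ := fun y =>
    Matrix.of fun p j => Fin.cases ((mj j : ℂ) * φ j τ y)
      (fun i => pderiv' i (φ j) τ y) p with hAdef
  have hjac : jacJacobian mj φ τ z = (A z).det := by rw [hAdef]; rfl
  -- reflection factorization
  set CMat : Matrix (Fin (l + 1)) (Fin (l + 1)) ℂ := Matrix.of fun p q =>
    Fin.cases (Fin.cases (1:ℂ) (fun _ => 0) q)
      (fun i => Fin.cases (0:ℂ) (fun k => Sc k i) q) p with hCdef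
  have hAzC : A z = CMat * A u := by
    ext p j
    refine Fin.cases ?_ (fun i => ?_) p
    · rw [Matrix.mul_apply, Fin.sum_univ_succ]
      simp only [hAdef, hCdef, Matrix.of_apply, Fin.cases_zero, Fin.cases_succ,
        one_mul, zero_mul, Finset.sum_const_zero, add_zero]
      rw [hudef, hinv j z]
    · rw [Matrix.mul_apply, Fin.sum_univ_succ]
      simp only [hAdef, hCdef, Matrix.of_apply, Fin.cases_zero, Fin.cases_succ,
        zero_mul, zero_add]
      rw [hudef]
      exact pderiv_reflect (hdiff j) Sc (hinv j) z i
  -- translation factorization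
  set gx : Fin l → ℂ := fun i => pairC M xC (Pi.single i 1) with hgxdef
  set BMat : Matrix (Fin (l + 1)) (Fin (l + 1)) ℂ := Matrix.of fun p q =>
    Fin.cases (Fin.cases (1:ℂ) (fun _ => 0) q)
      (fun i => Fin.cases (-(2 * (Real.pi : ℂ) * Complex.I) * gx i)
        (fun k => (1 : Matrix (Fin l) (Fin l) ℂ) i k) q) p with hBdef
  set eu : Fin (l + 1) → ℂ := fun j =>
    Complex.exp ((-(mj j : ℂ) * (Real.pi : ℂ) * Complex.I * (P * τ)) +
      (-(mj j : ℂ) * (Real.pi : ℂ) * Complex.I * 2) * pairC M xC u) with heudef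
  have hAtrans : A (u + cvec) = BMat * A u * Matrix.diagonal eu := by
    ext p j
    rw [Matrix.mul_diagonal, Matrix.mul_apply, Fin.sum_univ_succ]
    refine Fin.cases ?_ (fun i => ?_) p
    · simp only [hAdef, hBdef, Matrix.of_apply, Fin.cases_zero, Fin.cases_succ,
        one_mul, zero_mul, Finset.sum_const_zero, add_zero]
      rw [hell j u, heudef]
      ring
    · simp only [hAdef, hBdef, Matrix.of_apply, Fin.cases_zero, Fin.cases_succ,
        Matrix.one_apply, ite_mul, zero_mul, one_mul, Finset.sum_ite_eq,
        Finset.mem_univ, if_true]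
      rw [pderiv_translate (hdiff j) M xC cvec _ _ (hell j) u i, heudef, hgxdef]
      ring
  -- determinants
  have hdetC : CMat.det = Sc.det := by
    rw [hCdef]
    rw [show (Matrix.of fun p q : Fin (l+1) =>
      Fin.cases (Fin.cases (1:ℂ) (fun _ => 0) q)
        (fun i => Fin.cases (0:ℂ) (fun k => Sc k i) q) p).det
      = Sc.transpose.det from det_blockish (fun _ => (0:ℂ)) Sc.transpose]
    exact Matrix.det_transpose Sc
  have hdetB : BMat.det = 1 := by
    rw [hBdef]
    rw [show (Matrix.of fun p q : Fin (l+1) =>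
      Fin.cases (Fin.cases (1:ℂ) (fun _ => 0) q)
        (fun i => Fin.cases (-(2 * (Real.pi : ℂ) * Complex.I) * gx i)
          (fun k => (1 : Matrix (Fin l) (Fin l) ℂ) i k) q) p).det
      = (1 : Matrix (Fin l) (Fin l) ℂ).det from
        det_blockish (fun i => -(2 * (Real.pi : ℂ) * Complex.I) * gx i) 1]
    exact Matrix.det_one
  -- determinant of the reflection
  have hScentry : ∀ i j, Sc i j = (if i = j then (1:ℂ) else 0) +
      rC i * (-(2 * pairC M rC (Pi.single j 1) / Q)) := by
    intro i j
    have h0 := hSv (Pi.single j 1)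
    rw [Matrix.mulVec_single, MulOpposite.op_one, one_smul] at h0
    have h1 : Sc i j = (Pi.single j (1:ℂ) : Fin l → ℂ) i - 2 * pairC M rC (Pi.single j 1) /
      Q * (r i : ℂ) := congrFun h0 i
    rw [h1, Pi.single_apply]
    simp only [hrC]
    ring
  have hScform : Sc = 1 + Matrix.replicateCol Unit rC *
      Matrix.replicateRow Unit (fun j => -(2 * pairC M rC (Pi.single j 1) / Q)) := by
    ext i j
    rw [hScentry i j]
    simp [Matrix.one_apply, Matrix.mul_apply, Matrix.replicateCol_apply, Matrix.replicateRow_apply]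
  have hdetSc : Sc.det = -1 := by
    rw [hScform, Matrix.det_one_add_replicateCol_mul_replicateRow]
    have h2 : (fun j => -(2 * pairC M rC (Pi.single j 1) / Q)) ⬝ᵥ rC
        = -(2 / Q) * ∑ j, rC j * pairC M rC (Pi.single j 1) := by
      simp only [dotProduct, Finset.mul_sum]
      exact Finset.sum_congr rfl fun j _ => by ring
    rw [h2]
    simp only [← pairCL_apply]
    rw [← clm_apply_eq_sum (pairCL M rC) rC, pairCL_apply, ← hQdef]
    have hdm : (2 / Q) * Q = 2 := div_mul_cancel₀ 2 hQ0
    linear_combination -hdm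
  -- determinant of the diagonal part
  obtain ⟨s, hs⟩ := even_quad hM.symm hM.even_diag r
  have hkey : P * τ + 2 * pairC M xC u = -((a:ℂ) * (b:ℂ)) * Q := by
    have hP : P = (a:ℂ)^2 * Q := by
      rw [hPdef, hxC, pairC_smul_left, pairC_smul_right, hQdef]
      ring
    have hu' : u = z - ((a:ℂ) * τ + (b:ℂ)) • rC := by
      rw [hu]
      funext i
      simp [Pi.sub_apply, Pi.smul_apply, smul_eq_mul]
    have hpxu : pairC M xC u = (a:ℂ) * pairC M rC z -
        (a:ℂ) * (((a:ℂ) * τ + (b:ℂ)) * Q) := by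
      rw [hxC, pairC_smul_left, hu', pairC_sub_right, pairC_smul_right, hQdef]
      ring
    linear_combination τ * hP + 2 * hpxu + (a:ℂ) * h2pair
  have hterm : ∀ j : Fin (l + 1),
      (-(mj j : ℂ) * (Real.pi : ℂ) * Complex.I * (P * τ)) +
        (-(mj j : ℂ) * (Real.pi : ℂ) * Complex.I * 2) * pairC M xC u =
      (mj j : ℂ) * ((Real.pi : ℂ) * Complex.I * ((a:ℂ) * (b:ℂ) * Q)) := by
    intro j
    linear_combination (-(mj j : ℂ) * (Real.pi : ℂ) * Complex.I) * hkey
  have hQ2 : (Qz : ℂ) = 2 * (s : ℂ) := by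
    have hs' : Qz = s + s := by rw [hQzdef]; exact hs
    rw [hs']
    push_cast
    ring
  have hdetD : (Matrix.diagonal eu).det = 1 := by
    rw [Matrix.det_diagonal]
    have hprod : ∏ j, eu j = Complex.exp (∑ j,
        ((-(mj j : ℂ) * (Real.pi : ℂ) * Complex.I * (P * τ)) +
          (-(mj j : ℂ) * (Real.pi : ℂ) * Complex.I * 2) * pairC M xC u)) := by
      rw [Complex.exp_sum]
    rw [hprod]
    have hsum2 : (∑ j, ((-(mj j : ℂ) * (Real.pi : ℂ) * Complex.I * (P * τ)) +
          (-(mj j : ℂ) * (Real.pi : ℂ) * Complex.I * 2) * pairC M xC u)) =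
        (((∑ j, (mj j : ℤ)) * a * b * s : ℤ) : ℂ) * (2 * (Real.pi : ℂ) * Complex.I) := by
      rw [Finset.sum_congr rfl (fun j _ => hterm j), ← Finset.sum_mul, hQcast, hQ2]
      push_cast
      ring
    rw [hsum2]
    exact Complex.exp_int_mul_two_pi_mul_I _
  -- conclusion
  have hdet1 : (A z).det = (A u).det := by
    conv_lhs => rw [hz]
    rw [hAtrans, Matrix.det_mul, Matrix.det_mul, hdetB, hdetD]
    ring
  have hdet2 : (A z).det = -(A u).det := by
    rw [hAzC, Matrix.det_mul, hdetC, hdetSc]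
    ring
  have h0 : (A u).det = 0 := by
    have h := hdet1.symm.trans hdet2
    linear_combination ((1:ℂ)/2) * h
  rw [hjac, hdet1, h0]

end
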